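/- arXiv:2311.15285 — 2 statements merged into one kernel-verified Lean document; each statement's English description precedes it below -/
import Mathlib

section
/- Let κ = ∫_{ρ₁}^{ρ₂} dμ_rad(r) and λ = (κ log ρ₂ − ∫_{ρ₁}^{ρ₂} (log r) dμ_rad(r)) / (κ log(ρ₂/ρ₁)) for a finite positive Borel measure μ_rad on [ρ₁,ρ₂] with 0 < ρ₁ < ρ₂ and κ > 0. Define the measure ν on the two circles {|z| = ρ₁} ∪ {|z| = ρ₂} by dν = λκ dθ/(2π) on the inner circle and (1−λ)κ dθ/(2π) on the outer circle. Then for every z with |z| ≤ ρ₁, ∫ log|z−w|⁻¹ dν(w) = ∫_{ρ₁}^{ρ₂} (log(1/r)) dμ_rad(r), and for every z with |z| ≥ ρ₂, ∫ log|z−w|⁻¹ dν(w) = κ log(1/|z|). -/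
open MeasureTheory intervalIntegral Complex Metric in
lemma mean_lt {a : ℂ} (ha : ‖a‖ < 1) :
    ∫ θ in (0:ℝ)..(2*Real.pi), Real.log (‖1 - a * Complex.exp (θ * I)‖) = 0 := by
  set f : ℂ → ℂ := fun w => Complex.log (1 - a * w) with hf
  have hslit : ∀ w : ℂ, ‖w‖ ≤ 1 → (1 - a * w) ∈ Complex.slitPlane := by
    intro w hw
    refine Or.inl ?_
    have h1 : (a * w).re ≤ ‖a * w‖ := Complex.re_le_norm _
    have h2 : ‖a * w‖ ≤ ‖a‖ := by
      rw [norm_mul]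
      calc ‖a‖ * ‖w‖ ≤ ‖a‖ * 1 :=
        mul_le_mul_of_nonneg_left hw (norm_nonneg a)
      _ = ‖a‖ := mul_one _
    simp only [Complex.sub_re, Complex.one_re]
    linarith
  have hd : DifferentiableOn ℂ f (closedBall 0 1) := by
    intro w hw
    have : DifferentiableAt ℂ f w := by
      apply DifferentiableAt.clog
      · exact (differentiableAt_const _).sub ((differentiableAt_const a).mul differentiableAt_id)
      · exact hslit w (by simpa [Complex.dist_eq] using mem_closedBall.mp hw)
    exact this.differentiableWithinAt
  have hC := hd.circleIntegral_sub_inv_smul (mem_ball_self one_pos)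
  have hf0 : f 0 = 0 := by simp [hf]
  rw [hf0, smul_zero] at hC
  -- unfold circle integral
  rw [circleIntegral] at hC
  simp only [deriv_circleMap, circleMap, ofReal_one, one_mul, zero_add, sub_zero,
    smul_eq_mul] at hC
  have hC2 : ∫ θ in (0:ℝ)..(2*Real.pi), I * f (Complex.exp (θ * I)) = 0 := by
    rw [← hC]
    apply intervalIntegral.integral_congr
    intro θ _
    have hne : Complex.exp (θ * I) ≠ 0 := Complex.exp_ne_zero _
    field_simp
  rw [intervalIntegral.integral_const_mul] at hC2
  have hC3 : ∫ θ in (0:ℝ)..(2*Real.pi), f (Complex.exp (θ * I)) = 0 := by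
    rcases mul_eq_zero.mp hC2 with h | h
    · exact absurd h I_ne_zero
    · exact h
  have hcont : Continuous fun θ : ℝ => f (Complex.exp (θ * I)) := by
    rw [continuous_iff_continuousAt]
    intro θ
    apply ContinuousAt.clog
    · fun_prop
    · exact hslit _ (by simp [Complex.norm_exp])
  have hint : IntervalIntegrable (fun θ : ℝ => f (Complex.exp (θ * I))) volume 0 (2*Real.pi) :=
    hcont.intervalIntegrable _ _
  have := Complex.reCLM.intervalIntegral_comp_comm hint
  rw [hC3] at this
  simp only [map_zero] at this
  refine Eq.trans ?_ this
  apply intervalIntegral.integral_congr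
  intro θ _
  simp [hf, Complex.log_re]

open Complex in
lemma sq_abs_one_sub (a θ : ℝ) :
    ‖1 - (a:ℂ) * Complex.exp (θ * I)‖ ^ 2 = 1 - 2*a*Real.cos θ + a^2 := by
  rw [Complex.sq_norm, Complex.normSq_apply]
  simp [Complex.exp_mul_I, Complex.cos_ofReal_re, Complex.sin_ofReal_re]
  ring_nf
  nlinarith [Real.sin_sq_add_cos_sq θ]

noncomputable def boundFn (θ : ℝ) : ℝ := Real.log 2 + (Real.log Real.pi - Real.log |θ|)

open Complex Real in
lemma bound_est {a : ℝ} (ha1 : 1/2 ≤ a) (ha2 : a ≤ 1) {θ : ℝ} (hθ0 : θ ≠ 0)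
    (hθ : |θ| ≤ π) : |Real.log (‖1 - (a:ℂ) * Complex.exp (θ * I)‖)| ≤ boundFn θ := by
  set X := ‖1 - (a:ℂ) * Complex.exp (θ * I)‖ with hX
  have hθpos : 0 < |θ| := abs_pos.mpr hθ0
  -- lower bound : |θ|/π ≤ X
  have hsin : |θ| / π ≤ Real.sin (|θ|/2) := by
    have := Real.mul_le_sin (x := |θ|/2) (by positivity) (by linarith)
    calc |θ|/π = 2/π * (|θ|/2) := by ring
    _ ≤ _ := this
  have hsq : (|θ|/π)^2 ≤ X^2 := by
    have h1 : X^2 = 1 - 2*a*Real.cos θ + a^2 := sq_abs_one_sub a θ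
    have h2 : Real.sin (|θ|/2)^2 = (1 - Real.cos θ)/2 := by
      rw [Real.sin_sq_eq_half_sub]
      rw [show 2*(|θ|/2) = |θ| by ring]
      rcases abs_choice θ with h | h <;> rw [h]
      · ring
      · rw [Real.cos_neg]; ring
    have h3 : 1 - 2*a*Real.cos θ + a^2 = (1-a)^2 + 2*a*(1 - Real.cos θ) := by ring
    have hcos : Real.cos θ ≤ 1 := Real.cos_le_one θ
    have hs : 0 ≤ Real.sin (|θ|/2) := Real.sin_nonneg_of_nonneg_of_le_pi (by positivity)
      (by linarith [Real.pi_pos])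
    have hsin2 : (|θ|/π)^2 ≤ Real.sin (|θ|/2)^2 := by
      have h0 : (0:ℝ) ≤ |θ|/π := by positivity
      nlinarith
    nlinarith [sq_nonneg (1-a), mul_le_mul_of_nonneg_right ha1 (sq_nonneg (Real.sin (|θ|/2)))]
  have hlow : |θ|/π ≤ X := by
    have h0 : (0:ℝ) ≤ |θ|/π := by positivity
    nlinarith [norm_nonneg (1 - (a:ℂ) * Complex.exp (θ * I))]
  have hXpos : 0 < X := lt_of_lt_of_le (by positivity) hlow
  -- upper bound : X ≤ 2
  have hup : X ≤ 2 := by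
    calc X ≤ ‖(1:ℂ)‖ + ‖(a:ℂ) * Complex.exp (θ * I)‖ := by
          exact (norm_sub_le _ _)
    _ ≤ 1 + 1 := by
          simp only [Complex.norm_exp, norm_one, norm_mul, Complex.norm_real, Real.norm_eq_abs]
          have : (↑θ * I).re = 0 := by simp
          rw [this, Real.exp_zero, mul_one]
          have : |a| ≤ 1 := abs_le.mpr ⟨by linarith, ha2⟩
          linarith
    _ = 2 := by norm_num
  have hππ : 0 ≤ Real.log π - Real.log |θ| := by
    have := Real.log_le_log hθpos hθ
    linarith
  have hl2 : (0:ℝ) ≤ Real.log 2 := Real.log_nonneg (by norm_num)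
  rw [abs_le]
  constructor
  · have : Real.log (|θ|/π) ≤ Real.log X := Real.log_le_log (by positivity) hlow
    rw [Real.log_div (ne_of_gt hθpos) (ne_of_gt Real.pi_pos)] at this
    simp only [boundFn]
    linarith
  · have : Real.log X ≤ Real.log 2 := Real.log_le_log hXpos hup
    simp only [boundFn]
    linarith

open MeasureTheory Real Set in
lemma integrableOn_log_Ioc : IntegrableOn Real.log (Set.Ioc 0 Real.pi) := by
  have h01 : IntegrableOn Real.log (Set.Ioc 0 1) := by
    have hg : IntegrableOn (fun x : ℝ => 2 * x ^ (-(1/2) : ℝ)) (Set.Ioc (0:ℝ) 1) := by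
      have := (intervalIntegral.integrableOn_Ioo_rpow_iff (s := (-(1/2):ℝ)) one_pos).mpr (by norm_num)
      have h2 : IntegrableOn (fun x : ℝ => x ^ (-(1/2) : ℝ)) (Set.Ioc (0:ℝ) 1) :=
        this.congr_set_ae Ioo_ae_eq_Ioc.symm
      exact h2.const_mul 2
    refine Integrable.mono' hg (Real.measurable_log.aestronglyMeasurable) ?_
    rw [ae_restrict_iff' measurableSet_Ioc]
    filter_upwards with x hx
    obtain ⟨hx0, hx1⟩ := hx
    have hlog : Real.log x ≤ 0 := Real.log_nonpos hx0.le hx1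
    rw [Real.norm_eq_abs, abs_of_nonpos hlog]
    have hr : Real.log (x ^ (-(1/2):ℝ)) ≤ x ^ (-(1/2):ℝ) := by
      have := Real.log_le_sub_one_of_pos (Real.rpow_pos_of_pos hx0 (-(1/2):ℝ))
      linarith
    rw [Real.log_rpow hx0] at hr
    nlinarith [Real.rpow_pos_of_pos hx0 (-(1/2):ℝ)]
  have h1π : IntegrableOn Real.log (Set.Ioc 1 Real.pi) := by
    have : ContinuousOn Real.log (Set.Icc 1 Real.pi) := by
      apply Real.continuousOn_log.mono
      intro x hx; simp only [Set.mem_compl_iff, Set.mem_singleton_iff]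
      intro h; rw [h] at hx; exact absurd hx.1 (by norm_num)
    exact (this.integrableOn_Icc).mono_set Set.Ioc_subset_Icc_self
  have : Set.Ioc (0:ℝ) Real.pi = Set.Ioc 0 1 ∪ Set.Ioc 1 Real.pi := by
    rw [Set.Ioc_union_Ioc_eq_Ioc (by norm_num) (by linarith [Real.pi_gt_three])]
  rw [this]
  exact h01.union h1π

open MeasureTheory Real Set in
lemma intervalIntegrable_log_abs : IntervalIntegrable (fun θ : ℝ => Real.log |θ|)
    MeasureTheory.volume (-Real.pi) Real.pi := by
  have h0π : IntervalIntegrable (fun θ : ℝ => Real.log |θ|) volume 0 Real.pi := by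
    rw [intervalIntegrable_iff_integrableOn_Ioc_of_le Real.pi_pos.le]
    exact integrableOn_log_Ioc.congr_fun (fun x hx => by rw [abs_of_pos hx.1]) measurableSet_Ioc
  have hneg : IntervalIntegrable (fun θ : ℝ => Real.log |θ|) volume (-Real.pi) 0 := by
    have := (IntervalIntegrable.iff_comp_neg).mp h0π
    simp only [abs_neg, neg_zero] at this
    exact this.symm
  exact hneg.trans h0π

open MeasureTheory in
lemma intervalIntegrable_boundFn : IntervalIntegrable boundFn
    MeasureTheory.volume (-Real.pi) Real.pi := by
  have : boundFn = fun θ => (Real.log 2 + Real.log Real.pi) - Real.log |θ| := by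
    funext θ; simp [boundFn]; ring
  rw [this]
  exact (intervalIntegrable_const).sub intervalIntegrable_log_abs

open MeasureTheory Complex in
lemma cont_aux (a : ℂ) : Continuous fun θ : ℝ => ‖1 - a * Complex.exp (θ * I)‖ :=
  continuous_norm.comp (by fun_prop)

open MeasureTheory Complex in
lemma meas_aux (a : ℂ) : Measurable fun θ : ℝ =>
    Real.log (‖1 - a * Complex.exp (θ * I)‖) :=
  Real.measurable_log.comp (cont_aux a).measurable

open Complex in
lemma periodic_aux (a : ℂ) : Function.Periodic
    (fun θ : ℝ => Real.log (‖1 - a * Complex.exp (θ * I)‖)) (2*Real.pi) := by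
  intro θ
  dsimp only
  have h : ((θ + 2*Real.pi : ℝ) : ℂ) * I = θ * I + 2*Real.pi*I := by push_cast; ring
  rw [h, Complex.exp_add, Complex.exp_two_pi_mul_I, mul_one]

open MeasureTheory Complex in
lemma mean_lt_sym {a : ℂ} (ha : ‖a‖ < 1) :
    ∫ θ in (-Real.pi)..Real.pi, Real.log (‖1 - a * Complex.exp (θ * I)‖) = 0 := by
  have h := (periodic_aux a).intervalIntegral_add_eq (-Real.pi) 0
  rw [show -Real.pi + 2*Real.pi = Real.pi by ring, zero_add] at h
  rw [h]
  exact mean_lt ha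

lemma ae_ne_zero : ∀ᵐ θ : ℝ, θ ≠ 0 := by
  rw [MeasureTheory.ae_iff]
  have : {a : ℝ | ¬ a ≠ 0} = {0} := by ext x; simp
  rw [this]
  exact MeasureTheory.measure_singleton 0

open Complex in
lemma exp_ne_one_of_mem {θ : ℝ} (hθ0 : θ ≠ 0) (h1 : -Real.pi < θ) (h2 : θ ≤ Real.pi) :
    Complex.exp (θ * I) ≠ 1 := by
  intro h
  rw [Complex.exp_eq_one_iff] at h
  obtain ⟨n, hn⟩ := h
  have hI : (θ:ℂ) = n * (2*Real.pi) := by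
    have hI' : (θ:ℂ) * I = (n * (2*Real.pi)) * I := by rw [hn]; push_cast; ring
    exact mul_right_cancel₀ Complex.I_ne_zero hI'
  have hθeq : θ = n * (2*Real.pi) := by exact_mod_cast hI
  have habs : |θ| ≤ Real.pi := abs_le.mpr ⟨h1.le, h2⟩
  rcases eq_or_ne n 0 with h0 | h0
  · rw [h0] at hθeq; simp at hθeq; exact hθ0 hθeq
  · have h1n : (1:ℝ) ≤ |(n:ℝ)| := by exact_mod_cast Int.one_le_abs h0
    have h2π : (0:ℝ) ≤ 2*Real.pi := by linarith [Real.pi_pos]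
    have : 2*Real.pi ≤ |θ| := by
      rw [hθeq, abs_mul, _root_.abs_of_nonneg h2π]
      nlinarith
    linarith [Real.pi_pos]

open MeasureTheory Complex Filter in
lemma K_zero : ∫ θ in (-Real.pi)..Real.pi,
    Real.log (‖1 - Complex.exp (θ * I)‖) = 0 := by
  set F : ℕ → ℝ → ℝ := fun n θ =>
    Real.log (‖1 - ((1 - 1/(n+2) : ℝ) : ℂ) * Complex.exp (θ * I)‖) with hF
  have han1 : ∀ n : ℕ, (1:ℝ)/2 ≤ 1 - 1/(n+2) := by
    intro n
    have hn0 : (0:ℝ) ≤ (n:ℝ) := Nat.cast_nonneg n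
    have h2 : (2:ℝ) ≤ (n:ℝ)+2 := by linarith
    have := one_div_le_one_div_of_le (by norm_num : (0:ℝ) < 2) h2
    linarith
  have han2 : ∀ n : ℕ, (1 - 1/((n:ℝ)+2)) < 1 := by
    intro n
    have hn0 : (0:ℝ) ≤ (n:ℝ) := Nat.cast_nonneg n
    have : (0:ℝ) < 1/((n:ℝ)+2) := by positivity
    linarith
  have hzero : ∀ n : ℕ, ∫ θ in (-Real.pi)..Real.pi, F n θ = 0 := by
    intro n
    apply mean_lt_sym
    rw [Complex.norm_real, Real.norm_eq_abs, _root_.abs_of_nonneg (by linarith [han1 n])]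
    exact han2 n
  have htend : Tendsto (fun n => ∫ θ in (-Real.pi)..Real.pi, F n θ) atTop
      (nhds (∫ θ in (-Real.pi)..Real.pi, Real.log (‖1 - Complex.exp (θ * I)‖))) := by
    apply intervalIntegral.tendsto_integral_filter_of_dominated_convergence boundFn
    · filter_upwards with n
      exact ((meas_aux _).aestronglyMeasurable).restrict
    · filter_upwards with n
      filter_upwards [ae_ne_zero] with θ hθ0 hθ
      rw [Set.uIoc_of_le (by linarith [Real.pi_pos])] at hθ
      have habs : |θ| ≤ Real.pi := abs_le.mpr ⟨hθ.1.le, hθ.2⟩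
      exact bound_est (han1 n) (han2 n).le hθ0 habs
    · exact intervalIntegrable_boundFn
    · filter_upwards [ae_ne_zero] with θ hθ0 hθ
      rw [Set.uIoc_of_le (by linarith [Real.pi_pos])] at hθ
      have hne : 1 - Complex.exp (θ * I) ≠ 0 := by
        intro h
        exact exp_ne_one_of_mem hθ0 hθ.1 hθ.2 (sub_eq_zero.mp h).symm
      have hcont : ContinuousAt (fun a : ℝ =>
          Real.log (‖1 - (a:ℂ) * Complex.exp (θ * I)‖)) 1 := by
        apply ContinuousAt.log
        · exact (continuous_norm.comp (by fun_prop)).continuousAt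
        · simpa [sub_eq_zero] using hne
      have han : Tendsto (fun n : ℕ => 1 - 1/((n:ℝ)+2)) atTop (nhds 1) := by
        have h2 : Tendsto (fun n : ℕ => 1/((n:ℝ)+2)) atTop (nhds 0) := by
          simp only [one_div]
          exact tendsto_inv_atTop_zero.comp
            (Filter.tendsto_atTop_add_const_right _ 2 tendsto_natCast_atTop_atTop)
        have h3 := (tendsto_const_nhds (x := (1:ℝ)) (f := atTop (α := ℕ))).sub h2
        simpa using h3
      have hc := hcont.tendsto.comp han
      simpa [hF, Function.comp_def] using hc
  rw [← hzero 0]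
  apply tendsto_nhds_unique htend
  simp only [hzero]
  exact tendsto_const_nhds

open MeasureTheory Complex Real

lemma onesub_ne_zero {b : ℂ} (hb1 : ‖b‖ < 1) (θ : ℝ) :
    1 - b * Complex.exp (θ * I) ≠ 0 := by
  intro h
  have h1 : b * Complex.exp (θ * I) = 1 := by
    have := sub_eq_zero.mp h; exact this.symm
  have := congrArg norm h1
  rw [norm_mul, Complex.norm_exp] at this
  simp at this
  rw [this] at hb1
  exact lt_irrefl 1 hb1

-- integrability of the boundary function shifted
lemma hInt : IntervalIntegrable (fun θ : ℝ => Real.log (‖1 - Complex.exp (θ * I)‖))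
    volume (-π) π := by
  rw [intervalIntegrable_iff_integrableOn_Ioc_of_le (by linarith [Real.pi_pos])]
  apply Integrable.mono'
    (g := boundFn)
  · exact intervalIntegrable_boundFn.1
  · have hm := meas_aux 1
    simp only [one_mul] at hm
    exact (hm.aestronglyMeasurable).restrict
  · filter_upwards [ae_restrict_of_ae ae_ne_zero, ae_restrict_mem measurableSet_Ioc]
      with θ hθ0 hθ
    have habs : |θ| ≤ π := abs_le.mpr ⟨hθ.1.le, hθ.2⟩
    have := bound_est (a := 1) (by norm_num) (by norm_num) hθ0 habs
    simpa using this

lemma meanInt {b : ℂ} (hb : ‖b‖ ≤ 1) :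
    IntervalIntegrable (fun θ : ℝ => Real.log (‖1 - b * Complex.exp (θ * I)‖))
      volume (-π) π := by
  rcases lt_or_eq_of_le hb with hb1 | hb1
  · refine Continuous.intervalIntegrable ?_ _ _
    rw [continuous_iff_continuousAt]
    intro θ
    apply ContinuousAt.log
    · exact (continuous_norm.comp (by fun_prop)).continuousAt
    · simpa [sub_eq_zero] using (onesub_ne_zero hb1 θ)
  · -- |b| = 1 : b = exp(φ I)
    set φ := b.arg with hφ
    have hbe : b = Complex.exp (φ * I) := by
      have := Complex.norm_mul_exp_arg_mul_I b
      rw [hb1] at this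
      simpa using this.symm
    have hfun : (fun θ : ℝ => Real.log (‖1 - b * Complex.exp (θ * I)‖))
        = fun θ : ℝ => Real.log (‖1 - Complex.exp (((θ + φ : ℝ)) * I)‖) := by
      funext θ
      rw [hbe, ← Complex.exp_add]
      congr 3
      push_cast; ring
    rw [hfun]
    have hφ1 : -π ≤ φ := le_of_lt (Complex.neg_pi_lt_arg b)
    have hφ2 : φ ≤ π := Complex.arg_le_pi b
    have hπ : (0:ℝ) < π := Real.pi_pos
    set h : ℝ → ℝ := fun θ => Real.log (‖1 - Complex.exp (θ * I)‖) with hh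
    have hper : Function.Periodic h (2*π) := by
      have := periodic_aux 1
      simp only [one_mul] at this
      exact this
    have hbig : IntervalIntegrable h volume (-(3*π)) (3*π) := by
      have h1 : IntervalIntegrable h volume (-π) π := hInt
      have h2 : IntervalIntegrable h volume π (3*π) := by
        have := h1.comp_sub_right (2*π)
        rw [show -π + 2*π = π by ring, show π + 2*π = 3*π by ring] at this
        have heq : (fun x => h (x - 2*π)) = h := funext fun x => hper.sub_eq x
        rwa [heq] at this
      have h3 : IntervalIntegrable h volume (-(3*π)) (-π) := by
        have := h1.comp_add_right (2*π)
        rw [show -π - 2*π = -(3*π) by ring, show π - 2*π = -π by ring] at this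
        have heq : (fun x => h (x + 2*π)) = h := funext fun x => hper x
        rwa [heq] at this
      exact (h3.trans h1).trans h2
    have hshift : IntervalIntegrable h volume (-π + φ) (π + φ) := by
      apply hbig.mono_set
      rw [Set.uIcc_of_le (by linarith), Set.uIcc_of_le (by linarith)]
      apply Set.Icc_subset_Icc <;> linarith
    have := hshift.comp_add_right φ
    rw [show -π + φ - φ = -π by ring, show π + φ - φ = π by ring] at this
    exact this

lemma meanVal {b : ℂ} (hb : ‖b‖ ≤ 1) :
    ∫ θ in (-π)..π, Real.log (‖1 - b * Complex.exp (θ * I)‖) = 0 := by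
  rcases lt_or_eq_of_le hb with hb1 | hb1
  · exact mean_lt_sym hb1
  · set φ := b.arg with hφ
    have hbe : b = Complex.exp (φ * I) := by
      have := Complex.norm_mul_exp_arg_mul_I b
      rw [hb1] at this
      simpa using this.symm
    set h : ℝ → ℝ := fun θ => Real.log (‖1 - Complex.exp (θ * I)‖) with hh
    have hper : Function.Periodic h (2*π) := by
      have := periodic_aux 1
      simp only [one_mul] at this
      exact this
    have hfun : ∀ θ : ℝ, Real.log (‖1 - b * Complex.exp (θ * I)‖) = h (θ + φ) := by
      intro θ
      rw [hbe, ← Complex.exp_add, hh]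
      simp only
      congr 3
      push_cast; ring
    calc ∫ θ in (-π)..π, Real.log (‖1 - b * Complex.exp (θ * I)‖)
        = ∫ θ in (-π)..π, h (θ + φ) := by
          apply intervalIntegral.integral_congr; intro θ _; exact hfun θ
      _ = ∫ θ in (-π + φ)..(π + φ), h θ := intervalIntegral.integral_comp_add_right h φ
      _ = ∫ θ in (-π)..π, h θ := by
          have := hper.intervalIntegral_add_eq (-π + φ) (-π)
          rw [show -π + φ + 2*π = π + φ by ring, show -π + 2*π = π by ring] at this
          exact this
      _ = 0 := K_zero

-- variants with b - e^{iθ}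
lemma flip_eq (b : ℂ) (θ : ℝ) :
    ‖b - Complex.exp (θ * I)‖ =
      ‖1 - b * Complex.exp (((-θ : ℝ)) * I)‖ := by
  have hm : ((-θ:ℝ):ℂ) * I = -(↑θ * I) := by push_cast; ring
  rw [hm]
  have hinv : Complex.exp (-(↑θ*I)) * Complex.exp ((θ:ℂ)*I) = 1 := by
    rw [← Complex.exp_add]; simp
  have hb' : b * Complex.exp (-(↑θ*I)) * Complex.exp ((θ:ℂ)*I) = b := by
    rw [mul_assoc, hinv, mul_one]
  have key : (1 - b * Complex.exp (-(↑θ*I))) * Complex.exp ((θ:ℂ)*I)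
      = Complex.exp ((θ:ℂ)*I) - b := by
    linear_combination -hb'
  have h2 := congrArg norm key
  rw [norm_mul, Complex.norm_exp] at h2
  have h3 : ((θ:ℂ) * I).re = 0 := by simp
  rw [h3, Real.exp_zero, mul_one] at h2
  rw [h2, norm_sub_rev]

lemma meanInt' {b : ℂ} (hb : ‖b‖ ≤ 1) :
    IntervalIntegrable (fun θ : ℝ => Real.log (‖b - Complex.exp (θ * I)‖))
      volume (-π) π := by
  have h1 := ((IntervalIntegrable.iff_comp_neg).mp (meanInt hb)).symm
  have heq : (fun θ : ℝ => Real.log (‖b - Complex.exp (θ * I)‖))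
      = fun θ : ℝ => Real.log (‖1 - b * Complex.exp (((-θ:ℝ)) * I)‖) := by
    funext θ; rw [flip_eq]
  rw [heq]
  simp only [neg_neg] at h1
  exact h1

lemma meanVal' {b : ℂ} (hb : ‖b‖ ≤ 1) :
    ∫ θ in (-π)..π, Real.log (‖b - Complex.exp (θ * I)‖) = 0 := by
  calc ∫ θ in (-π)..π, Real.log (‖b - Complex.exp (θ * I)‖)
      = ∫ θ in (-π)..π,
          (fun t : ℝ => Real.log (‖1 - b * Complex.exp ((t:ℂ) * I)‖)) (-θ) := by
        apply intervalIntegral.integral_congr; intro θ _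
        simp only
        rw [flip_eq]
    _ = ∫ θ in (-π)..π, Real.log (‖1 - b * Complex.exp ((θ:ℂ) * I)‖) := by
        have hcn := intervalIntegral.integral_comp_neg (a := -π) (b := π)
          (fun t : ℝ => Real.log (‖1 - b * Complex.exp ((t:ℂ) * I)‖))
        simpa using hcn
    _ = 0 := meanVal hb

open MeasureTheory Complex Real


lemma ae_exp_ne (w : ℂ) : ∀ᵐ θ : ℝ, Complex.exp (θ * I) ≠ w := by
  rw [MeasureTheory.ae_iff]
  refine measure_mono_null ?_
    (((Set.countable_singleton w).preimage_circleMap 0 one_ne_zero).measure_zero _)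
  intro θ hθ
  simp only [Set.mem_setOf_eq, not_not] at hθ
  simp [circleMap, hθ]

lemma circleAvg_inside {r : ℝ} (hr : 0 < r) {z : ℂ} (hz : ‖z‖ ≤ r) :
    ∫ θ in (-π)..π, Real.log (‖z - r * Complex.exp (θ * I)‖)
      = 2 * π * Real.log r := by
  set b : ℂ := z / r with hb
  have hrC : (r:ℂ) ≠ 0 := by exact_mod_cast hr.ne'
  have hble : ‖b‖ ≤ 1 := by
    rw [hb, norm_div, Complex.norm_real, Real.norm_eq_abs, _root_.abs_of_pos hr]
    rw [div_le_one hr]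
    exact hz
  have hpt : ∀ θ : ℝ, ‖z - r * Complex.exp (θ * I)‖
      = r * ‖b - Complex.exp (θ * I)‖ := by
    intro θ
    have : z - r * Complex.exp (θ * I) = r * (b - Complex.exp (θ * I)) := by
      rw [hb]; field_simp
    rw [this, norm_mul, Complex.norm_real, Real.norm_eq_abs, _root_.abs_of_pos hr]
  have hae : ∀ᵐ θ : ℝ, θ ∈ Set.uIoc (-π) π →
      Real.log (‖z - r * Complex.exp (θ * I)‖)
        = Real.log r + Real.log (‖b - Complex.exp (θ * I)‖) := by
    filter_upwards [ae_exp_ne b] with θ hθ _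
    rw [hpt θ, Real.log_mul hr.ne']
    rw [ne_eq, norm_eq_zero, sub_eq_zero]
    intro h
    exact hθ h.symm
  rw [intervalIntegral.integral_congr_ae hae]
  rw [intervalIntegral.integral_add (intervalIntegrable_const) (meanInt' hble)]
  rw [meanVal' hble, intervalIntegral.integral_const, smul_eq_mul, add_zero]
  ring

lemma circleAvg_outside {r : ℝ} (hr : 0 < r) {z : ℂ} (hz : r ≤ ‖z‖) :
    ∫ θ in (-π)..π, Real.log (‖z - r * Complex.exp (θ * I)‖)
      = 2 * π * Real.log (‖z‖) := by
  have hz0 : z ≠ 0 := by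
    intro h
    rw [h] at hz; simp at hz; linarith
  set b : ℂ := r / z with hb
  have hrC : (r:ℂ) ≠ 0 := by exact_mod_cast hr.ne'
  have habs : 0 < ‖z‖ := lt_of_lt_of_le hr hz
  have hble : ‖b‖ ≤ 1 := by
    rw [hb, norm_div, Complex.norm_real, Real.norm_eq_abs, _root_.abs_of_pos hr]
    rw [div_le_one habs]
    exact hz
  have hpt : ∀ θ : ℝ, ‖z - r * Complex.exp (θ * I)‖
      = ‖z‖ * ‖1 - b * Complex.exp (θ * I)‖ := by
    intro θ
    have : z - r * Complex.exp (θ * I) = z * (1 - b * Complex.exp (θ * I)) := by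
      rw [hb]; field_simp
    rw [this, norm_mul]
  have hae : ∀ᵐ θ : ℝ, θ ∈ Set.uIoc (-π) π →
      Real.log (‖z - r * Complex.exp (θ * I)‖)
        = Real.log (‖z‖) + Real.log (‖1 - b * Complex.exp (θ * I)‖) := by
    have hbne : b ≠ 0 := by
      rw [hb]; exact div_ne_zero hrC hz0
    filter_upwards [ae_exp_ne b⁻¹] with θ hθ _
    rw [hpt θ, Real.log_mul habs.ne']
    rw [ne_eq, norm_eq_zero, sub_eq_zero]
    intro h
    apply hθ
    exact eq_inv_of_mul_eq_one_left (by rw [mul_comm]; exact h.symm)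
  rw [intervalIntegral.integral_congr_ae hae]
  rw [intervalIntegral.integral_add (intervalIntegrable_const) (meanInt hble)]
  rw [meanVal hble, intervalIntegral.integral_const, smul_eq_mul, add_zero]
  ring

open MeasureTheory Complex Real

lemma inv_integral_eq (r : ℝ) (z : ℂ) :
    (∫ θ in (-π)..π, Real.log (‖z - r * Complex.exp (θ * I)‖)⁻¹)
      = -∫ θ in (-π)..π, Real.log (‖z - r * Complex.exp (θ * I)‖) := by
  rw [← intervalIntegral.integral_neg]
  apply intervalIntegral.integral_congr
  intro θ _
  simp [Real.log_inv]

open MeasureTheory in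
/-- Let `0 < ρ₁ < ρ₂`, let `μ_rad` be a finite positive Borel measure concentrated on
`[ρ₁,ρ₂]` with total mass `κ > 0`, and let
`λ = (κ log ρ₂ − ∫ log r dμ_rad)/(κ log(ρ₂/ρ₁))`. Let `ν` be the measure putting density
`λκ dθ/(2π)` on the circle `{|z| = ρ₁}` and `(1−λ)κ dθ/(2π)` on `{|z| = ρ₂}`. Then for
`|z| ≤ ρ₁`, `∫ log|z−w|⁻¹ dν(w) = ∫ log(1/r) dμ_rad`, and for `|z| ≥ ρ₂`,
`∫ log|z−w|⁻¹ dν(w) = κ log(1/|z|)`. -/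
theorem balayage_annulus_potential (ρ₁ ρ₂ : ℝ) (h1 : 0 < ρ₁) (h12 : ρ₁ < ρ₂)
    (μ : Measure ℝ) [IsFiniteMeasure μ] (hμ : μ (Set.Icc ρ₁ ρ₂)ᶜ = 0)
    (κ lam : ℝ) (hκdef : κ = (μ (Set.Icc ρ₁ ρ₂)).toReal) (hκ : 0 < κ)
    (hlam : lam = (κ * Real.log ρ₂ - ∫ r, Real.log r ∂μ) / (κ * Real.log (ρ₂ / ρ₁))) :
    (∀ z : ℂ, ‖z‖ ≤ ρ₁ →
      (lam * κ) * (∫ θ in (-Real.pi)..Real.pi,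
          Real.log (‖z - (ρ₁ : ℂ) * Complex.exp ((θ : ℂ) * Complex.I)‖)⁻¹)
            / (2 * Real.pi)
        + ((1 - lam) * κ) * (∫ θ in (-Real.pi)..Real.pi,
            Real.log (‖z - (ρ₂ : ℂ) * Complex.exp ((θ : ℂ) * Complex.I)‖)⁻¹)
              / (2 * Real.pi)
        = ∫ r, Real.log (1 / r) ∂μ) ∧
    (∀ z : ℂ, ρ₂ ≤ ‖z‖ →
      (lam * κ) * (∫ θ in (-Real.pi)..Real.pi,
          Real.log (‖z - (ρ₁ : ℂ) * Complex.exp ((θ : ℂ) * Complex.I)‖)⁻¹)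
            / (2 * Real.pi)
        + ((1 - lam) * κ) * (∫ θ in (-Real.pi)..Real.pi,
            Real.log (‖z - (ρ₂ : ℂ) * Complex.exp ((θ : ℂ) * Complex.I)‖)⁻¹)
              / (2 * Real.pi)
        = κ * Real.log (1 / ‖z‖)) := by
  have h2 : 0 < ρ₂ := lt_trans h1 h12
  have hπ : (0:ℝ) < π := Real.pi_pos
  have hlog12 : 0 < Real.log (ρ₂ / ρ₁) := Real.log_pos ((one_lt_div h1).mpr h12)
  have hlam' : lam * (κ * Real.log (ρ₂ / ρ₁)) = κ * Real.log ρ₂ - ∫ r, Real.log r ∂μ := by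
    rw [hlam]
    field_simp
  have hlogdiv : Real.log (ρ₂ / ρ₁) = Real.log ρ₂ - Real.log ρ₁ :=
    Real.log_div h2.ne' h1.ne'
  have hIinv : (∫ r, Real.log (1 / r) ∂μ) = -∫ r, Real.log r ∂μ := by
    rw [← integral_neg]
    apply integral_congr_ae
    filter_upwards with r
    rw [one_div, Real.log_inv]
  constructor
  · intro z hz
    rw [inv_integral_eq, inv_integral_eq, circleAvg_inside h1 hz,
      circleAvg_inside h2 (le_trans hz h12.le), hIinv]
    have hne : (2*π) ≠ 0 := by positivity
    rw [← add_div, div_eq_iff hne]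
    linear_combination 2*π*hlam' - 2*π*lam*κ*hlogdiv
  · intro z hz
    rw [inv_integral_eq, inv_integral_eq, circleAvg_outside h1 (le_trans h12.le hz),
      circleAvg_outside h2 hz, one_div, Real.log_inv]
    have hne : (2*π) ≠ 0 := by positivity
    rw [← add_div, div_eq_iff hne]
    ring
end

section
/- Let τ ∈ [0,1), x₀, y₀ ∈ ℝ, a > 0, and let ν be the measure on the circle {x₀+iy₀+ae^{iθ} : θ ∈ (−π,π]} with density dν = (a/(π(1−τ²)))[(1−τ²)/(2a) − a/2 − x₀(1−τ)cosθ − y₀(1+τ)sinθ + aτ cos(2θ)] dθ. Then ∫ Q dν = [x₀²(1−τ) + y₀²(1+τ) + a²(1 − x₀²(3−2τ)/(1+τ) − y₀²(3+2τ)/(1−τ)) − a⁴(1+τ²)/(1−τ²)]/(1−τ²), where Q(x+iy) = x²/(1+τ) + y²/(1−τ). -/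
open Real MeasureTheory intervalIntegral

lemma aux_sin_four_pi : Real.sin (4 * Real.pi) = 0 := by
  have h := Real.sin_int_mul_pi 4
  push_cast at h
  exact h

lemma aux_cos_pow_four : ∫ θ in (-Real.pi)..Real.pi, Real.cos θ ^ 4 = 3 * Real.pi / 4 := by
  have h := integral_cos_pow (a := -Real.pi) (b := Real.pi) 2
  norm_num at h
  rw [h]; ring

lemma aux_sin_pow_four : ∫ θ in (-Real.pi)..Real.pi, Real.sin θ ^ 4 = 3 * Real.pi / 4 := by
  have h := integral_sin_pow (a := -Real.pi) (b := Real.pi) 2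
  norm_num at h
  rw [h]; ring

lemma aux_sin_cos_cubed : ∫ θ in (-Real.pi)..Real.pi, Real.sin θ * Real.cos θ ^ 3 = 0 := by
  have h := integral_sin_pow_odd_mul_cos_pow (a := -Real.pi) (b := Real.pi) 0 3
  norm_num at h
  rw [h]

lemma aux_sin_cubed_cos : ∫ θ in (-Real.pi)..Real.pi, Real.sin θ ^ 3 * Real.cos θ = 0 := by
  have h := integral_sin_pow_mul_cos_pow_odd (a := -Real.pi) (b := Real.pi) 3 0
  norm_num at h
  rw [h]

lemma aux_sin_sq_cos_sq : ∫ θ in (-Real.pi)..Real.pi, Real.sin θ ^ 2 * Real.cos θ ^ 2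
    = Real.pi / 4 := by
  rw [integral_sin_sq_mul_cos_sq]
  rw [show (4 : ℝ) * -Real.pi = -(4 * Real.pi) by ring, Real.sin_neg, aux_sin_four_pi]
  ring

lemma aux_key (A00 A10 A01 A20 A11 A02 A30 A12 A21 A03 A40 A13 A22 A31 A04 : ℝ) :
    (∫ θ in (-Real.pi)..Real.pi, (A00 + A10 * Real.cos θ + A01 * Real.sin θ + A20 * Real.cos θ ^ 2 + A11 * (Real.sin θ * Real.cos θ) + A02 * Real.sin θ ^ 2 + A30 * Real.cos θ ^ 3 + A12 * (Real.sin θ * Real.cos θ ^ 2) + A21 * (Real.sin θ ^ 2 * Real.cos θ) + A03 * Real.sin θ ^ 3 + A40 * Real.cos θ ^ 4 + A13 * (Real.sin θ * Real.cos θ ^ 3) + A22 * (Real.sin θ ^ 2 * Real.cos θ ^ 2) + A31 * (Real.sin θ ^ 3 * Real.cos θ) + A04 * Real.sin θ ^ 4))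
    = 2 * Real.pi * A00 + Real.pi * A20 + Real.pi * A02 + 3 * Real.pi / 4 * A40
      + Real.pi / 4 * A22 + 3 * Real.pi / 4 * A04 := by
  repeat rw [intervalIntegral.integral_add (by apply Continuous.intervalIntegrable; fun_prop)
    (by apply Continuous.intervalIntegrable; fun_prop)]
  simp only [intervalIntegral.integral_const_mul, intervalIntegral.integral_const,
    integral_cos, integral_sin, integral_cos_sq, integral_sin_sq, integral_sin_mul_cos₁,
    integral_cos_pow_three, integral_sin_pow_three, integral_sin_mul_cos_sq,
    integral_sin_sq_mul_cos, aux_cos_pow_four, aux_sin_pow_four, aux_sin_cos_cubed,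
    aux_sin_cubed_cos, aux_sin_sq_cos_sq]
  simp [Real.sin_pi, Real.cos_pi]
  ring

set_option maxHeartbeats 2000000 in
/-- Let `τ ∈ [0,1)`, `x₀, y₀ ∈ ℝ`, `a > 0`, and let `ν` be the measure on the circle
`{x₀+iy₀+ae^{iθ}}` with density
`dν = (a/(π(1−τ²)))[(1−τ²)/(2a) − a/2 − x₀(1−τ)cosθ − y₀(1+τ)sinθ + aτ cos 2θ]dθ`.
Then `∫ Q dν` equals
`[x₀²(1−τ) + y₀²(1+τ) + a²(1 − x₀²(3−2τ)/(1+τ) − y₀²(3+2τ)/(1−τ)) − a⁴(1+τ²)/(1−τ²)]/(1−τ²)`,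
where `Q(x+iy) = x²/(1+τ) + y²/(1−τ)`. -/
theorem integral_Q_balayage_complement_disk
    (τ x₀ y₀ a : ℝ) (hτ0 : 0 ≤ τ) (hτ1 : τ < 1) (ha : 0 < a) :
    ∫ θ in (-Real.pi)..Real.pi,
        ((x₀ + a * Real.cos θ) ^ 2 / (1 + τ) + (y₀ + a * Real.sin θ) ^ 2 / (1 - τ)) *
          (a / (Real.pi * (1 - τ ^ 2)) *
            ((1 - τ ^ 2) / (2 * a) - a / 2 - x₀ * (1 - τ) * Real.cos θ
              - y₀ * (1 + τ) * Real.sin θ + a * τ * Real.cos (2 * θ)))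
      = (x₀ ^ 2 * (1 - τ) + y₀ ^ 2 * (1 + τ)
          + a ^ 2 * (1 - x₀ ^ 2 * (3 - 2 * τ) / (1 + τ) - y₀ ^ 2 * (3 + 2 * τ) / (1 - τ))
          - a ^ 4 * (1 + τ ^ 2) / (1 - τ ^ 2)) / (1 - τ ^ 2) := by
  have hπ : Real.pi ≠ 0 := Real.pi_ne_zero
  have h1 : (1 : ℝ) + τ ≠ 0 := by positivity
  have h2 : (1 : ℝ) - τ ≠ 0 := by nlinarith
  have ha' : a ≠ 0 := ne_of_gt ha
  have h12 : (1 : ℝ) - τ ^ 2 ≠ 0 := by nlinarith [sq_nonneg τ]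
  have hcong : (∫ θ in (-Real.pi)..Real.pi,
      ((x₀ + a * Real.cos θ) ^ 2 / (1 + τ) + (y₀ + a * Real.sin θ) ^ 2 / (1 - τ)) *
          (a / (Real.pi * (1 - τ ^ 2)) *
            ((1 - τ ^ 2) / (2 * a) - a / 2 - x₀ * (1 - τ) * Real.cos θ
              - y₀ * (1 + τ) * Real.sin θ + a * τ * Real.cos (2 * θ))))
      = ∫ θ in (-Real.pi)..Real.pi, (((((1/2)*y₀^2 + (-1/2)*y₀^2*a^2 + (1/2)*x₀^2 + (-1/2)*x₀^2*a^2 + (1/2)*τ*y₀^2 + (-1/2)*τ*y₀^2*a^2 + (-1/2)*τ*x₀^2 + (1/2)*τ*x₀^2*a^2 + (-1/2)*τ^2*y₀^2 + (-1/2)*τ^2*x₀^2 + (-1/2)*τ^3*y₀^2 + (1/2)*τ^3*x₀^2)) + (((1)*x₀*a + (-1)*x₀*a^3 + (-1)*x₀*y₀^2*a + (-1)*x₀^3*a + (-1)*τ*x₀*a + (1)*τ*x₀*a^3 + (2)*τ*x₀^3*a + (-1)*τ^2*x₀*a + (1)*τ^2*x₀*y₀^2*a + (-1)*τ^2*x₀^3*a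 + (1)*τ^3*x₀*a)) * Real.cos θ + (((1)*y₀*a + (-1)*y₀*a^3 + (-1)*y₀^3*a + (-1)*x₀^2*y₀*a + (1)*τ*y₀*a + (-1)*τ*y₀*a^3 + (-2)*τ*y₀^3*a + (-1)*τ^2*y₀*a + (-1)*τ^2*y₀^3*a + (1)*τ^2*x₀^2*y₀*a + (-1)*τ^3*y₀*a)) * Real.sin θ + (((1/2)*a^2 + (-1/2)*a^4 + (-2)*x₀^2*a^2 + (-1/2)*τ*a^2 + (1/2)*τ*a^4 + (1)*τ*y₀^2*a^2 + (5)*τ*x₀^2*a^2 + (-1/2)*τ^2*a^2 + (1)*τ^2*y₀^2*a^2 + (-3)*τ^2*x₀^2*a^2 + (1/2)*τ^3*a^2)) * Real.cos θ ^ 2 + (((-4)*x₀*y₀*a^2 + (4)*τ^2*x₀*y₀*a^2)) * (Real.sin θ * Real.cos θ) + (((1/2)*a^2 + (-1/2)*a^4 + (-2)*y₀^2*a^2 + (1/2)*τ*a^2 + (-1/2)*τ*a^4 + (-5)*τ*y₀^2*a^2 + (-1)*τ*x₀^2*a^2 + (-1/2)*τ^2*a^2 + (-3)*τ^2*y₀^2*a^2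 + (1)*τ^2*x₀^2*a^2 + (-1/2)*τ^3*a^2)) * Real.sin θ ^ 2 + (((-1)*x₀*a^3 + (4)*τ*x₀*a^3 + (-3)*τ^2*x₀*a^3)) * Real.cos θ ^ 3 + (((-1)*y₀*a^3 + (2)*τ*y₀*a^3 + (3)*τ^2*y₀*a^3)) * (Real.sin θ * Real.cos θ ^ 2) + (((-1)*x₀*a^3 + (-2)*τ*x₀*a^3 + (3)*τ^2*x₀*a^3)) * (Real.sin θ ^ 2 * Real.cos θ) + (((-1)*y₀*a^3 + (-4)*τ*y₀*a^3 + (-3)*τ^2*y₀*a^3)) * Real.sin θ ^ 3 + (((1)*τ*a^4 + (-1)*τ^2*a^4)) * Real.cos θ ^ 4 + (0) * (Real.sin θ * Real.cos θ ^ 3) + (((2)*τ^2*a^4)) * (Real.sin θ ^ 2 * Real.cos θ ^ 2) + (0) * (Real.sin θ ^ 3 * Real.cos θ) + (((-1)*τ*a^4 + (-1)*τ^2*a^4)) * Real.sin θ ^ 4) / (Real.pi * (1 + τ) ^ 2 * (1 - τ) ^ 2)) := by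
    apply intervalIntegral.integral_congr
    intro θ _
    simp only [Real.cos_two_mul']
    field_simp
    ring
  rw [hcong, intervalIntegral.integral_div, aux_key]
  field_simp
  ring
end
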